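/- Let N ≤ M ≤ G be finite groups with N an abelian normal subgroup of G such that gcd(|N|, [G:M]) = 1. If N has a complement in M, then N has a complement in G. -/

import Mathlib

/-- Gaschütz: if `N ≤ M ≤ G`, `N` abelian normal in `G`, `gcd(|N|, [G:M]) = 1`, and `N`
has a complement in `M`, then `N` has a complement in `G`. -/
theorem gaschuetz {G : Type*} [Group G] [Finite G] (N M : Subgroup G)
    (hNM : N ≤ M) (hnorm : N.Normal)
    (hab : ∀ x ∈ N, ∀ y ∈ N, x * y = y * x)
    (hcop : Nat.Coprime (Nat.card N) M.index)
    (hcompl : ∃ K : Subgroup G, K ≤ M ∧ N ⊓ K = ⊥ ∧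
      ∀ m ∈ M, ∃ x ∈ N, ∃ y ∈ K, m = x * y) :
    ∃ K : Subgroup G, N ⊓ K = ⊥ ∧ ∀ g : G, ∃ x ∈ N, ∃ y ∈ K, g = x * y := by
  classical
  -- trivial case `N = ⊥`
  by_cases hN1 : Nat.card N = 1
  · refine ⟨⊤, ?_, fun g => ⟨1, N.one_mem, g, trivial, (one_mul g).symm⟩⟩
    rw [Subgroup.card_eq_one.mp hN1]
    simp
  obtain ⟨K, hKM, hKbot, hKdec⟩ := hcompl
  -- uniqueness of decompositions
  have huniq : ∀ x ∈ N, ∀ y ∈ K, ∀ x' ∈ N, ∀ y' ∈ K, x * y = x' * y' → x = x' := by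
    intro x hx y hy x' hx' y' hy' h
    have h1 : x'⁻¹ * x = y' * y⁻¹ := by
      have h2 : x'⁻¹ * (x * y) = y' := by rw [h, inv_mul_cancel_left]
      rw [← h2]; group
    have h2 : x'⁻¹ * x ∈ N ⊓ K := by
      constructor
      · exact N.mul_mem (N.inv_mem hx') hx
      · rw [h1]; exact K.mul_mem hy' (K.inv_mem hy)
    rw [hKbot, Subgroup.mem_bot] at h2
    rw [eq_comm, ← inv_mul_eq_one, h2]
  -- the projection `f : M → N`
  have hdec : ∀ m : G, ∃ x : G, m ∈ M → x ∈ N ∧ ∃ y ∈ K, m = x * y := by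
    intro m
    by_cases hm : m ∈ M
    · obtain ⟨x, hx, y, hy, h⟩ := hKdec m hm
      exact ⟨x, fun _ => ⟨hx, y, hy, h⟩⟩
    · exact ⟨1, fun h => absurd h hm⟩
  choose f hf using hdec
  have hfN : ∀ m ∈ M, f m ∈ N := fun m hm => (hf m hm).1
  have hfval : ∀ x ∈ N, ∀ y ∈ K, f (x * y) = x := by
    intro x hx y hy
    have hmem : x * y ∈ M := M.mul_mem (hNM hx) (hKM hy)
    obtain ⟨hfn, y', hy', h⟩ := hf _ hmem
    exact (huniq _ hfn _ hy' _ hx _ hy h.symm)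
  have hfid : ∀ x ∈ N, f x = x := fun x hx => by
    simpa using hfval x hx 1 K.one_mem
  -- the cocycle identity for `f`
  have hfcoc : ∀ m₁ ∈ M, ∀ m₂ ∈ M, f (m₁ * m₂) = f m₁ * (m₁ * f m₂ * m₁⁻¹) := by
    intro m₁ hm₁ m₂ hm₂
    obtain ⟨hfn₁, y₁, hy₁, h₁⟩ := hf _ hm₁
    obtain ⟨hfn₂, y₂, hy₂, h₂⟩ := hf _ hm₂
    have key : m₁ * m₂ = (f m₁ * (y₁ * f m₂ * y₁⁻¹)) * (y₁ * y₂) := by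
      conv_lhs => rw [h₁, h₂]
      group
    have hconj : y₁ * f m₂ * y₁⁻¹ ∈ N := hnorm.conj_mem _ hfn₂ _
    have hmain := hfval _ (N.mul_mem hfn₁ hconj) _ (K.mul_mem hy₁ hy₂)
    rw [← key] at hmain
    rw [hmain]
    have hconj' : m₁ * f m₂ * m₁⁻¹ ∈ N := hnorm.conj_mem _ hfn₂ _
    have hcomm := hab _ hconj' _ hfn₁
    have hy₁eq : y₁ = (f m₁)⁻¹ * m₁ := eq_inv_mul_iff_mul_eq.mpr h₁.symm
    rw [hy₁eq]
    calc f m₁ * ((f m₁)⁻¹ * m₁ * f m₂ * ((f m₁)⁻¹ * m₁)⁻¹)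
        = (m₁ * f m₂ * m₁⁻¹) * f m₁ := by group
      _ = f m₁ * (m₁ * f m₂ * m₁⁻¹) := hcomm
  -- `N` is a commutative subgroup
  letI hNcomm : CommGroup N := { (inferInstance : Group N) with mul_comm := fun a b => Subtype.ext (hab a a.2 b b.2) }
  haveI : Fintype (G ⧸ M) := Fintype.ofFinite _
  set t : G ⧸ M → G := Quotient.out with ht
  have htq : ∀ q : G ⧸ M, QuotientGroup.mk (t q) = q := fun q => QuotientGroup.out_eq' q
  have hmem : ∀ x : G, (t (QuotientGroup.mk x))⁻¹ * x ∈ M := by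
    intro x
    exact QuotientGroup.eq.mp (htq (QuotientGroup.mk x))
  have hmkt : ∀ (g x : G),
      QuotientGroup.mk (g * t (QuotientGroup.mk x)) = (QuotientGroup.mk (g * x) : G ⧸ M) := by
    intro g x
    rw [QuotientGroup.eq]
    have : (g * t (QuotientGroup.mk x))⁻¹ * (g * x) = (t (QuotientGroup.mk x))⁻¹ * x := by
      group
    rw [this]
    exact hmem x
  -- conjugation as a monoid hom on N
  have hconjmem : ∀ (g : G) (x : N), g * (x : G) * g⁻¹ ∈ N := fun g x => hnorm.conj_mem _ x.2 _
  set ν : G → N →* N := fun g =>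
    { toFun := fun x => ⟨g * (x : G) * g⁻¹, hconjmem g x⟩
      map_one' := by ext; simp
      map_mul' := fun x y => by ext; push_cast; group } with hν
  -- the averaged cocycle `d : G → N`
  have hμM : ∀ (g : G) (q : G ⧸ M), (t (QuotientGroup.mk (g * t q)))⁻¹ * (g * t q) ∈ M :=
    fun g q => hmem (g * t q)
  have htermN : ∀ (g : G) (q : G ⧸ M),
      t (QuotientGroup.mk (g * t q)) * f ((t (QuotientGroup.mk (g * t q)))⁻¹ * (g * t q)) *
        (t (QuotientGroup.mk (g * t q)))⁻¹ ∈ N :=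
    fun g q => hnorm.conj_mem _ (hfN _ (hμM g q)) _
  set term : G → G ⧸ M → N := fun g q => ⟨_, htermN g q⟩ with hterm
  set d : G → N := fun g => ∏ q : G ⧸ M, term g q with hd
  -- reindexing equivalence
  have hσbij : ∀ g : G, Function.Bijective (fun q : G ⧸ M => QuotientGroup.mk (g * t q) : G ⧸ M → G ⧸ M) := by
    intro g
    have h1 : ∀ (g' : G) (q : G ⧸ M),
        QuotientGroup.mk (g'⁻¹ * t (QuotientGroup.mk (g' * t q))) = q := by
      intro g' q
      rw [hmkt, inv_mul_cancel_left, htq]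
    exact Function.bijective_iff_has_inverse.mpr
      ⟨fun q => QuotientGroup.mk (g⁻¹ * t q), fun q => h1 g q, fun q => by
        have := h1 g⁻¹ q; rwa [inv_inv] at this⟩
  -- pointwise cocycle identity
  have hptwise : ∀ (g₁ g₂ : G) (q : G ⧸ M),
      (term (g₁ * g₂) q : G) =
        (term g₁ (QuotientGroup.mk (g₂ * t q)) : G) * (g₁ * (term g₂ q : G) * g₁⁻¹) := by
    intro g₁ g₂ q
    set u : G ⧸ M := QuotientGroup.mk (g₂ * t q) with hu
    set a₂ : G := t u with ha₂
    set μ₂ : G := a₂⁻¹ * (g₂ * t q) with hμ₂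
    set a₁ : G := t (QuotientGroup.mk (g₁ * a₂)) with ha₁
    set μ₁ : G := a₁⁻¹ * (g₁ * a₂) with hμ₁
    have hq12 : QuotientGroup.mk (g₁ * g₂ * t q) = (QuotientGroup.mk (g₁ * a₂) : G ⧸ M) := by
      rw [ha₂, hu, hmkt, mul_assoc]
    have ha12 : t (QuotientGroup.mk (g₁ * g₂ * t q)) = a₁ := by rw [hq12]
    have hμ12 : (t (QuotientGroup.mk (g₁ * g₂ * t q)))⁻¹ * (g₁ * g₂ * t q) = μ₁ * μ₂ := by
      rw [ha12, hμ₁, hμ₂]; group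
    have hμ₁M : μ₁ ∈ M := hmem (g₁ * a₂)
    have hμ₂M : μ₂ ∈ M := hmem (g₂ * t q)
    have hfc := hfcoc μ₁ hμ₁M μ₂ hμ₂M
    show t (QuotientGroup.mk (g₁ * g₂ * t q)) *
        f ((t (QuotientGroup.mk (g₁ * g₂ * t q)))⁻¹ * (g₁ * g₂ * t q)) *
        (t (QuotientGroup.mk (g₁ * g₂ * t q)))⁻¹ =
        (a₁ * f μ₁ * a₁⁻¹) * (g₁ * (a₂ * f μ₂ * a₂⁻¹) * g₁⁻¹)
    rw [hμ12, ha12, hfc]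
    have haμ : a₁ * μ₁ = g₁ * a₂ := by rw [hμ₁]; group
    calc a₁ * (f μ₁ * (μ₁ * f μ₂ * μ₁⁻¹)) * a₁⁻¹
        = (a₁ * f μ₁ * a₁⁻¹) * ((a₁ * μ₁) * f μ₂ * (a₁ * μ₁)⁻¹) := by group
      _ = (a₁ * f μ₁ * a₁⁻¹) * (g₁ * (a₂ * f μ₂ * a₂⁻¹) * g₁⁻¹) := by rw [haμ]; group
  -- cocycle identity for d, in N
  have hdcoc : ∀ g₁ g₂ : G, d (g₁ * g₂) = d g₁ * ν g₁ (d g₂) := by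
    intro g₁ g₂
    have h1 : d (g₁ * g₂) = ∏ q : G ⧸ M,
        (term g₁ (QuotientGroup.mk (g₂ * t q)) * ν g₁ (term g₂ q)) := by
      refine Finset.prod_congr rfl fun q _ => ?_
      ext
      push_cast
      exact hptwise g₁ g₂ q
    rw [h1, Finset.prod_mul_distrib, ← map_prod]
    congr 1
    exact Fintype.prod_bijective _ (hσbij g₂) _ _ (fun q => rfl)
  -- d restricted to N is the index-th power map
  have hdN : ∀ x : G, (hx : x ∈ N) → d x = (⟨x, hx⟩ : N) ^ M.index := by
    intro x hx
    have hterm : ∀ q : G ⧸ M, term x q = (⟨x, hx⟩ : N) := by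
      intro q
      have hq : QuotientGroup.mk (x * t q) = q := by
        have : QuotientGroup.mk (x * t q) = (QuotientGroup.mk (t q) : G ⧸ M) := by
          rw [QuotientGroup.eq]
          have h1 : (x * t q)⁻¹ * t q = (t q)⁻¹ * x⁻¹ * t q := by group
          rw [h1]
          exact hNM (by simpa [mul_assoc] using hnorm.conj_mem' x⁻¹ (N.inv_mem hx) (t q))
        rw [this, htq]
      ext
      show t (QuotientGroup.mk (x * t q)) *
          f ((t (QuotientGroup.mk (x * t q)))⁻¹ * (x * t q)) *
          (t (QuotientGroup.mk (x * t q)))⁻¹ = x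
      rw [hq]
      have hμN : (t q)⁻¹ * (x * t q) ∈ N := by
        simpa [mul_assoc] using hnorm.conj_mem' x hx (t q)
      rw [hfid _ hμN]
      group
    rw [hd]
    simp only [hterm]
    rw [Finset.prod_const, Finset.card_univ, Subgroup.index, Nat.card_eq_fintype_card]
  -- choose the inverse exponent r
  have hcard1 : 1 < Nat.card N := by
    have h0 : Nat.card N ≠ 0 := Nat.card_ne_zero.mpr ⟨⟨1, N.one_mem⟩, inferInstance⟩
    omega
  obtain ⟨r, -, hr⟩ := Nat.exists_mul_mod_eq_one_of_coprime hcop.symm hcard1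
  have hpow : ∀ x : N, x ^ (M.index * r) = x := by
    intro x
    have h1 : M.index * r = Nat.card N * (M.index * r / Nat.card N) + 1 := by
      conv_lhs => rw [← Nat.div_add_mod (M.index * r) (Nat.card N)]
      rw [hr]
    rw [h1, pow_add, pow_mul, pow_card_eq_one', one_pow, one_mul, pow_one]
  -- the normalized cocycle e
  set e : G → N := fun g => d g ^ r with he
  have hecoc : ∀ g₁ g₂ : G, e (g₁ * g₂) = e g₁ * ν g₁ (e g₂) := by
    intro g₁ g₂
    rw [he]
    show d (g₁ * g₂) ^ r = d g₁ ^ r * ν g₁ (d g₂ ^ r)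
    rw [hdcoc, mul_pow, map_pow]
  have heN : ∀ x : G, (hx : x ∈ N) → e x = (⟨x, hx⟩ : N) := by
    intro x hx
    rw [he]
    show d x ^ r = _
    rw [hdN x hx, ← pow_mul]
    exact hpow _
  have he1 : e 1 = 1 := by
    have h1 : e 1 = e 1 * ν 1 (e 1) := by
      conv_lhs => rw [← mul_one (1 : G), hecoc]
    have h2 : ∀ x : N, ν 1 x = x := by
      intro x; ext; show (1 : G) * (x : G) * (1 : G)⁻¹ = (x : G); group
    rw [h2] at h1
    exact (left_eq_mul.mp h1)
  have hνone : ∀ (g : G) (x : N), ν g x = 1 → x = 1 := by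
    intro g x hx
    have h1 : g * (x : G) * g⁻¹ = 1 :=
      calc g * (x : G) * g⁻¹ = ((ν g x : N) : G) := rfl
        _ = ((1 : N) : G) := congrArg Subtype.val hx
        _ = 1 := rfl
    ext
    show (x : G) = 1
    have h2 : (x : G) = g⁻¹ * (g * (x : G) * g⁻¹) * g := by group
    rw [h2, h1]
    group
  refine ⟨{ carrier := {g : G | e g = 1}
            one_mem' := he1
            mul_mem' := fun {a b} ha hb => by
              show e (a * b) = 1
              rw [hecoc, ha, hb, map_one, mul_one]
            inv_mem' := fun {a} ha => by
              show e a⁻¹ = 1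
              have h1 : e (a * a⁻¹) = e a * ν a (e a⁻¹) := hecoc a a⁻¹
              rw [mul_inv_cancel, he1, ha, one_mul] at h1
              exact hνone a _ h1.symm }, ?_, ?_⟩
  · rw [eq_bot_iff]
    rintro x ⟨hxN, hxK⟩
    have : e x = 1 := hxK
    rw [heN x hxN] at this
    simpa [Subgroup.mem_bot] using congrArg Subtype.val this
  · intro g
    refine ⟨(e g : G), (e g).2, (e g : G)⁻¹ * g, ?_, by rw [mul_inv_cancel_left]⟩
    show e ((e g : G)⁻¹ * g) = 1
    rw [hecoc, heN _ (N.inv_mem (e g).2)]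
    refine Subtype.ext ?_
    show (e g : G)⁻¹ * ((e g : G)⁻¹ * (e g : G) * ((e g : G)⁻¹)⁻¹) = (1 : G)
    have hc : (e g : G)⁻¹ * (e g : G) = 1 := inv_mul_cancel _
    rw [hc]
    group
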